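/- arXiv:0801.3174 — 14 statements merged into one kernel-verified Lean document; each statement's English description precedes it below -/
import Mathlib

section
/- For every j ∈ {1,…,J}, the J−1 vectors {d_k : k ∈ {1,…,J}, k ≠ j} span the hyperplane H := {x ∈ ℝ^J : Σ_{i=1}^J x_i = 0} (and hence, since H has dimension J−1, they form a basis of H). -/
/-- For every `j ∈ {1,…,J}`, the `J−1` vectors `{d_k : k ≠ j}` span the
hyperplane `H := {x ∈ ℝ^J : Σ_i x_i = 0}` (and, being linearly independent, they form a
basis of `H`). -/
theorem gps_directions_span_hyperplane
    (J : ℕ) (hJ : 2 ≤ J) (β : Fin J → ℝ)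
    (hβ : ∀ i, 0 < β i ∧ β i < 1) (hβsum : ∑ i, β i = 1)
    (d : Fin J → Fin J → ℝ)
    (hd : ∀ i j, d i j = if j = i then 1 else -(β j) / (1 - β i))
    (j : Fin J) :
    (Submodule.span ℝ (d '' {k | k ≠ j}) : Set (Fin J → ℝ))
        = {x : Fin J → ℝ | ∑ i, x i = 0} ∧
    LinearIndependent ℝ (fun k : {k : Fin J // k ≠ j} => d k) := by
  have hb1 : ∀ i, (1 : ℝ) - β i ≠ 0 := fun i => by have := (hβ i).2; intro h; linarith
  have hb0 : ∀ i, β i ≠ 0 := fun i => ne_of_gt (hβ i).1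
  -- the vectors v i = e_i - β
  set v : Fin J → Fin J → ℝ := fun i l => (if l = i then 1 else 0) - β l with hv
  have hdv : ∀ i, d i = (1 - β i)⁻¹ • v i := by
    intro i; funext l
    rw [hd]
    have hne := hb1 i
    by_cases h : l = i
    · simp only [h, if_true, Pi.smul_apply, hv, smul_eq_mul, if_pos rfl]
      field_simp
    · simp only [if_neg h, Pi.smul_apply, hv, smul_eq_mul]
      field_simp
      ring
  have hsum_v : ∀ (a : Fin J → ℝ) (l : Fin J),
      (∑ i, a i • v i) l = a l - (∑ i, a i) * β l := by
    intro a l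
    rw [Finset.sum_apply]
    have : ∀ i, (a i • v i) l = (if l = i then a i else 0) - a i * β l := by
      intro i
      simp only [Pi.smul_apply, hv, smul_eq_mul, mul_sub]
      by_cases h : l = i <;> simp [h]
    simp only [this, Finset.sum_sub_distrib, Finset.sum_ite_eq, Finset.mem_univ, if_pos,
      Finset.sum_mul]
  have herase : ∀ k : Fin J, ∑ l ∈ Finset.univ.erase k, β l = 1 - β k := by
    intro k
    have h := Finset.add_sum_erase Finset.univ β (Finset.mem_univ k)
    rw [hβsum] at h
    linarith
  have hβv : (∑ i, β i • v i) = 0 := by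
    funext l
    rw [Pi.zero_apply, hsum_v, hβsum]
    ring
  set S := Submodule.span ℝ (d '' {k | k ≠ j}) with hS
  have hvk : ∀ k, k ≠ j → v k ∈ S := by
    intro k hk
    have : v k = (1 - β k) • d k := by
      rw [hdv, smul_smul, mul_inv_cancel₀ (hb1 k), one_smul]
    rw [this]
    exact S.smul_mem _ (Submodule.subset_span ⟨k, hk, rfl⟩)
  have hvj : v j ∈ S := by
    have h := Finset.add_sum_erase Finset.univ (fun i => β i • v i) (Finset.mem_univ j)
    rw [hβv] at h
    have hveq : β j • v j = -(∑ i ∈ Finset.univ.erase j, β i • v i) :=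
      eq_neg_of_add_eq_zero_left h
    have hjv : v j = (β j)⁻¹ • (-(∑ i ∈ Finset.univ.erase j, β i • v i)) := by
      rw [← hveq, smul_smul, inv_mul_cancel₀ (hb0 j), one_smul]
    rw [hjv]
    refine S.smul_mem _ (S.neg_mem (Submodule.sum_mem _ ?_))
    intro i hi
    exact S.smul_mem _ (hvk i (Finset.ne_of_mem_erase hi))
  have hvall : ∀ i, v i ∈ S := by
    intro i
    by_cases h : i = j
    · rw [h]; exact hvj
    · exact hvk i h
  -- sum of components of each d k is zero
  have hdsum : ∀ k : Fin J, ∑ l, d k l = 0 := by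
    intro k
    have h := Finset.add_sum_erase Finset.univ (d k) (Finset.mem_univ k)
    rw [← h, hd]
    rw [if_pos rfl]
    have : ∑ l ∈ Finset.univ.erase k, d k l
        = ∑ l ∈ Finset.univ.erase k, -(β l) / (1 - β k) := by
      apply Finset.sum_congr rfl
      intro l hl
      rw [hd, if_neg (Finset.ne_of_mem_erase hl)]
    rw [this]
    have : ∑ l ∈ Finset.univ.erase k, -(β l) / (1 - β k)
        = -(∑ l ∈ Finset.univ.erase k, β l) / (1 - β k) := by
      rw [← Finset.sum_div, ← Finset.sum_neg_distrib]
    rw [this, herase k]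
    have hne := hb1 k
    field_simp
    ring
  constructor
  · ext x
    simp only [SetLike.mem_coe, Set.mem_setOf_eq]
    constructor
    · intro hx
      -- span ⊆ hyperplane
      have : ∀ y ∈ S, ∑ i, y i = 0 := by
        intro y hy
        induction hy using Submodule.span_induction with
        | mem z hz =>
          obtain ⟨k, _, rfl⟩ := hz
          exact hdsum k
        | zero => simp
        | add a b _ _ ha hb => simp [Pi.add_apply, Finset.sum_add_distrib, ha, hb]
        | smul c a _ ha => simp [Pi.smul_apply, smul_eq_mul, ← Finset.mul_sum, ha]
      exact this x hx
    · intro hx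
      have hxv : x = ∑ i, x i • v i := by
        funext l
        rw [hsum_v, hx]
        ring
      rw [hxv]
      exact Submodule.sum_mem _ fun i _ => S.smul_mem _ (hvall i)
  · rw [Fintype.linearIndependent_iff]
    intro g hg
    set c : Fin J → ℝ := fun i => if h : i = j then 0 else g ⟨i, h⟩ with hcdef
    have hcj : c j = 0 := by simp [hcdef]
    have hc : ∑ i, c i • d i = 0 := by
      have h1 : ∑ i, c i • d i = c j • d j + ∑ i ∈ Finset.univ.erase j, c i • d i :=
        (Finset.add_sum_erase Finset.univ (fun i => c i • d i) (Finset.mem_univ j)).symm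
      rw [h1, hcj, zero_smul, zero_add]
      have h2 : ∑ i ∈ Finset.univ.erase j, c i • d i
          = ∑ k : {k : Fin J // k ≠ j}, c k • d k := by
        apply Finset.sum_subtype
        intro x; simp
      rw [h2]
      calc ∑ k : {k : Fin J // k ≠ j}, c k • d k
          = ∑ k : {k : Fin J // k ≠ j}, g k • d k := by
            apply Finset.sum_congr rfl
            intro k _
            congr 1
            simp [hcdef, k.2]
        _ = 0 := hg
    set a : Fin J → ℝ := fun i => (1 - β i)⁻¹ * c i with hadef
    have hav : ∑ i, a i • v i = 0 := by
      rw [← hc]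
      apply Finset.sum_congr rfl
      intro i _
      rw [hdv, smul_smul, hadef, mul_comm]
    have haj : a j = 0 := by simp [hadef, hcj]
    have hsa : ∑ i, a i = 0 := by
      have h := congrFun hav j
      rw [hsum_v, Pi.zero_apply, haj, zero_sub, neg_eq_zero, mul_eq_zero] at h
      rcases h with h | h
      · exact h
      · exact absurd h (hb0 j)
    have hai : ∀ i, a i = 0 := by
      intro i
      have h := congrFun hav i
      rw [hsum_v, Pi.zero_apply, hsa, zero_mul, sub_zero] at h
      exact h
    intro k
    have h := hai k
    rw [hadef] at h
    simp only [mul_eq_zero, inv_eq_zero] at h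
    rcases h with h | h
    · exact absurd h (hb1 k)
    · have : c (k : Fin J) = g k := by simp [hcdef, k.2]
      rw [this] at h
      exact h
end

section
/- The hyperplane H satisfies H = ⋃_{j∈I} C_j, where for each j ∈ I the cone C_j is defined by C_j := {Σ_{k∈I, k≠j} θ_k d_k : θ_k ≥ 0 for all k ≠ j}. -/
/-- The hyperplane `H = {x : Σ_i x_i = 0}` equals the union over `j` of the
cones `C_j = {Σ_{k≠j} θ_k d_k : θ_k ≥ 0 for all k ≠ j}`. -/
theorem gps_hyperplane_eq_union_of_cones
    (J : ℕ) (hJ : 2 ≤ J) (β : Fin J → ℝ)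
    (hβ : ∀ i, 0 < β i ∧ β i < 1) (hβsum : ∑ i, β i = 1)
    (d : Fin J → Fin J → ℝ)
    (hd : ∀ i j, d i j = if j = i then 1 else -(β j) / (1 - β i)) :
    {x : Fin J → ℝ | ∑ i, x i = 0}
      = ⋃ j : Fin J,
          {w : Fin J → ℝ | ∃ θ : Fin J → ℝ, (∀ k, k ≠ j → 0 ≤ θ k) ∧
            w = ∑ k ∈ Finset.univ.erase j, θ k • d k} := by
  haveI : NeZero J := ⟨by omega⟩
  have hβne : ∀ k : Fin J, (1 : ℝ) - β k ≠ 0 := fun k => by have := (hβ k).2; intro h; linarith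
  have hβerase : ∀ k : Fin J, ∑ m ∈ Finset.univ.erase k, β m = 1 - β k := by
    intro k
    have h := Finset.sum_erase_add Finset.univ β (Finset.mem_univ k)
    rw [hβsum] at h
    linarith
  have hdsum : ∀ k, ∑ m, d k m = 0 := by
    intro k
    rw [← Finset.sum_erase_add _ _ (Finset.mem_univ k)]
    have h1 : ∑ m ∈ Finset.univ.erase k, d k m = -(1 - β k) / (1 - β k) := by
      rw [eq_div_iff (hβne k), Finset.sum_mul]
      rw [Finset.sum_congr rfl (fun m hm => by
        rw [hd, if_neg (Finset.ne_of_mem_erase hm), div_mul_cancel₀ _ (hβne k)])]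
      rw [Finset.sum_neg_distrib, hβerase]
    rw [h1, hd, if_pos rfl, neg_div, div_self (hβne k)]
    ring
  ext x
  simp only [Set.mem_setOf_eq, Set.mem_iUnion]
  constructor
  · intro hx
    obtain ⟨j, -, hj⟩ := Finset.exists_min_image Finset.univ (fun i => x i / β i)
      Finset.univ_nonempty
    set t : Fin J → ℝ := fun m => x m - β m * (x j / β j) with ht
    have htnn : ∀ m, 0 ≤ t m := by
      intro m
      have h1 : x j / β j ≤ x m / β m := hj m (Finset.mem_univ m)
      have hb := (hβ m).1
      have : β m * (x j / β j) ≤ β m * (x m / β m) := by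
        exact mul_le_mul_of_nonneg_left h1 (le_of_lt hb)
      rw [mul_div_cancel₀ _ (ne_of_gt hb)] at this
      simp only [ht]
      linarith
    have htj : t j = 0 := by
      simp only [ht, mul_div_cancel₀ _ (ne_of_gt (hβ j).1), sub_self]
    have htsum : ∑ k, t k = -(x j / β j) := by
      simp only [ht]
      rw [Finset.sum_sub_distrib, hx, ← Finset.sum_mul, hβsum]
      ring
    refine ⟨j, fun k => (1 - β k) * t k, fun k _ => mul_nonneg (by have := (hβ k).2; linarith) (htnn k), ?_⟩
    have hfull : ∑ k ∈ Finset.univ.erase j, (fun k => (1 - β k) * t k) k • d k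
        = ∑ k, (fun k => (1 - β k) * t k) k • d k := by
      rw [← Finset.sum_erase_add _ _ (Finset.mem_univ j)]
      simp [htj]
    rw [hfull]
    funext m
    rw [Finset.sum_apply]
    have key : ∀ k : Fin J, ((1 - β k) * t k) • d k m
        = (if k = m then t m else 0) - β m * t k := by
      intro k
      by_cases h : k = m
      · subst h
        rw [hd, if_pos rfl, if_pos rfl, smul_eq_mul]
        ring
      · rw [hd, if_neg (fun hh : m = k => h hh.symm), if_neg h, smul_eq_mul]
        have heq : (1 - β k) * t k * (-β m / (1 - β k))
            = -β m * t k * ((1 - β k) * (1 - β k)⁻¹) := by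
          rw [div_eq_mul_inv]; ring
        rw [heq, mul_inv_cancel₀ (hβne k)]
        ring
    simp only [Pi.smul_apply] at key ⊢
    rw [Finset.sum_congr rfl (fun k _ => key k), Finset.sum_sub_distrib,
      Finset.sum_ite_eq' Finset.univ m (fun _ => t m), if_pos (Finset.mem_univ m),
      ← Finset.mul_sum, htsum]
    simp only [ht]
    ring
  · rintro ⟨j, θ, -, rfl⟩
    have hexp : ∀ i, (∑ k ∈ Finset.univ.erase j, θ k • d k) i
        = ∑ k ∈ Finset.univ.erase j, θ k * d k i := by
      intro i; rw [Finset.sum_apply]; rfl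
    simp only [hexp]
    rw [Finset.sum_comm]
    refine Finset.sum_eq_zero fun k _ => ?_
    rw [← Finset.mul_sum, hdsum, mul_zero]
end

section
/- For every w ∈ H there exists a unique vector θ ∈ ℝ_+^J such that θ_j = 0 for at least one j ∈ I and w = Σ_{j∈I} θ_j d_j. -/
/-- For every `w ∈ H` there is a unique `θ ∈ ℝ_+^J` with `θ_j = 0` for at
least one `j` and `w = Σ_j θ_j d_j`. -/
theorem gps_unique_nonneg_representation
    (J : ℕ) (hJ : 2 ≤ J) (β : Fin J → ℝ)
    (hβ : ∀ i, 0 < β i ∧ β i < 1) (hβsum : ∑ i, β i = 1)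
    (d : Fin J → Fin J → ℝ)
    (hd : ∀ i j, d i j = if j = i then 1 else -(β j) / (1 - β i))
    (w : Fin J → ℝ) (hw : ∑ i, w i = 0) :
    ∃! θ : Fin J → ℝ, (∀ k, 0 ≤ θ k) ∧ (∃ k, θ k = 0) ∧ w = ∑ k, θ k • d k := by
  have hb0 : ∀ k, 0 < β k := fun k => (hβ k).1
  have hb1 : ∀ k, 0 < 1 - β k := fun k => by linarith [(hβ k).2]
  have hb1' : ∀ k, (1:ℝ) - β k ≠ 0 := fun k => ne_of_gt (hb1 k)
  have hne : (Finset.univ : Finset (Fin J)).Nonempty :=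
    ⟨⟨0, by omega⟩, Finset.mem_univ _⟩
  -- key formula
  have key : ∀ θ : Fin J → ℝ, ∀ j, (∑ k, θ k • d k) j
      = θ j / (1 - β j) - β j * ∑ k, θ k / (1 - β k) := by
    intro θ j
    have h1 : ∀ k ∈ Finset.univ, θ k * d k j
        = (if j = k then θ k / (1 - β k) else 0) - β j * (θ k / (1 - β k)) := by
      intro k _
      rw [hd]
      by_cases h : j = k
      · rw [if_pos h, if_pos h]
        subst h
        field_simp [hb1' j]
      · rw [if_neg h, if_neg h]
        field_simp
        ring
    simp only [Finset.sum_apply, Pi.smul_apply, smul_eq_mul]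
    rw [Finset.sum_congr rfl h1, Finset.sum_sub_distrib, Finset.sum_ite_eq,
      if_pos (Finset.mem_univ j), ← Finset.mul_sum]
  have sumc : ∀ T : ℝ, ∑ k, (w k + β k * T) = T := by
    intro T
    rw [Finset.sum_add_distrib, hw, zero_add, ← Finset.sum_mul, hβsum, one_mul]
  set S : ℝ := Finset.univ.sup' hne (fun j => -w j / β j) with hS
  have hSle : ∀ j, -w j / β j ≤ S := by
    intro j
    rw [hS]
    exact Finset.le_sup' (fun j => -w j / β j) (Finset.mem_univ j)
  have hSnn : ∀ j, 0 ≤ w j + β j * S := by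
    intro j
    have h := hSle j
    rw [div_le_iff₀ (hb0 j)] at h
    nlinarith
  obtain ⟨j0, _, hj0⟩ := Finset.exists_mem_eq_sup' (s := Finset.univ) (H := hne) (fun j => -w j / β j)
  set θ0 : Fin J → ℝ := fun j => (w j + β j * S) * (1 - β j) with hθ0
  have hc0 : ∀ k, θ0 k / (1 - β k) = w k + β k * S := fun k =>
    mul_div_cancel_right₀ _ (hb1' k)
  have hsum0 : (∑ k, θ0 k / (1 - β k)) = S := by
    rw [Finset.sum_congr rfl (fun k _ => hc0 k), sumc]
  refine ⟨θ0, ⟨?_, ?_, ?_⟩, ?_⟩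
  · exact fun k => mul_nonneg (hSnn k) (hb1 k).le
  · refine ⟨j0, ?_⟩
    have h : w j0 + β j0 * S = 0 := by
      rw [hS, hj0]
      field_simp [(hb0 j0).ne']
      ring
    show (w j0 + β j0 * S) * (1 - β j0) = 0
    rw [h, zero_mul]
  · funext j
    rw [key θ0 j, hc0 j, hsum0]
    ring
  · intro θ ⟨hnn, ⟨k0, hk0⟩, hweq⟩
    set T : ℝ := ∑ k, θ k / (1 - β k) with hT
    have hc : ∀ j, θ j / (1 - β j) = w j + β j * T := by
      intro j
      have h := congrFun hweq j
      rw [key θ j] at h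
      linarith
    have hTS : T = S := by
      have h1 : S ≤ T := by
        apply Finset.sup'_le
        intro j _
        rw [div_le_iff₀ (hb0 j)]
        have := hc j
        have hnnj : 0 ≤ θ j / (1 - β j) := div_nonneg (hnn j) (hb1 j).le
        nlinarith
      have h2 : T ≤ S := by
        have h := hc k0
        rw [hk0, zero_div] at h
        have : T = -w k0 / β k0 := by
          field_simp [(hb0 k0).ne']
          linarith
        rw [this]
        exact hSle k0
      linarith
    funext j
    have h := hc j
    rw [hTS] at h
    have h2 : θ j = (w j + β j * S) * (1 - β j) := by
      rw [← h, div_mul_cancel₀ _ (hb1' j)]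
    rw [h2]
end

section
/- Let w ∈ H and let θ ∈ ℝ_+^J satisfy θ_j = 0 for at least one j ∈ I and w = Σ_{j∈I} θ_j d_j. Set σ := Σ_{k : θ_k > 0} θ_k/(1−β_k). Then σ ≥ 0, w_j = θ_j/(1−β_j) − β_j σ for every j ∈ I, and for every set E with {k ∈ I : θ_k > 0} ⊆ E ⊊ I one has σ = Σ_{k∈E} θ_k/(1−β_k) = (Σ_{j∈E} w_j)/(1 − Σ_{j∈E} β_j). -/
/-- if `w ∈ H`, `θ ∈ ℝ_+^J` has a zero coordinate and `w = Σ_j θ_j d_j`, then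
with `σ := Σ_{k : θ_k > 0} θ_k/(1−β_k)` one has `σ ≥ 0`,
`w_j = θ_j/(1−β_j) − β_j σ` for all `j`, and for every set `E` with
`{k : θ_k > 0} ⊆ E ⊊ I`, `σ = Σ_{k∈E} θ_k/(1−β_k) = (Σ_{j∈E} w_j)/(1 − Σ_{j∈E} β_j)`. -/
theorem gps_representation_formulas
    (J : ℕ) (hJ : 2 ≤ J) (β : Fin J → ℝ)
    (hβ : ∀ i, 0 < β i ∧ β i < 1) (hβsum : ∑ i, β i = 1)
    (d : Fin J → Fin J → ℝ)
    (hd : ∀ i j, d i j = if j = i then 1 else -(β j) / (1 - β i))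
    (w : Fin J → ℝ) (hw : ∑ i, w i = 0)
    (θ : Fin J → ℝ) (hθ : ∀ k, 0 ≤ θ k) (hzero : ∃ k, θ k = 0)
    (hrep : w = ∑ k, θ k • d k)
    (σ : ℝ)
    (hσ : σ = ∑ k ∈ Finset.univ.filter (fun k => 0 < θ k), θ k / (1 - β k)) :
    0 ≤ σ ∧
    (∀ j, w j = θ j / (1 - β j) - β j * σ) ∧
    (∀ E : Finset (Fin J),
      Finset.univ.filter (fun k => 0 < θ k) ⊆ E → E ≠ Finset.univ →
        σ = ∑ k ∈ E, θ k / (1 - β k) ∧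
        σ = (∑ j ∈ E, w j) / (1 - ∑ j ∈ E, β j)) := by
  have hb1 : ∀ k, (1 : ℝ) - β k ≠ 0 := fun k => by have := (hβ k).2; intro h; linarith
  have hb1pos : ∀ k, (0 : ℝ) < 1 - β k := fun k => by have := (hβ k).2; linarith
  have htermnn : ∀ k, 0 ≤ θ k / (1 - β k) := fun k => div_nonneg (hθ k) (le_of_lt (hb1pos k))
  -- σ equals the full sum
  have hσS : σ = ∑ k, θ k / (1 - β k) := by
    rw [hσ]
    apply Finset.sum_subset (Finset.filter_subset _ _)
    intro k _ hk
    simp only [Finset.mem_filter, Finset.mem_univ, true_and, not_lt] at hk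
    have : θ k = 0 := le_antisymm hk (hθ k)
    simp [this]
  have hσ0 : 0 ≤ σ := by
    rw [hσS]; exact Finset.sum_nonneg fun k _ => htermnn k
  have hwj : ∀ j, w j = θ j / (1 - β j) - β j * σ := by
    intro j
    have h1 : w j = ∑ k, θ k * d k j := by
      rw [hrep]; simp [Finset.sum_apply]
    have h2 : ∀ k, θ k * d k j =
        (if k = j then θ j / (1 - β j) else 0) - β j * (θ k / (1 - β k)) := by
      intro k
      rw [hd]
      by_cases h : k = j
      · subst h
        rw [if_pos rfl, if_pos rfl, mul_one]
        have h2 : θ k / (1 - β k) - β k * (θ k / (1 - β k)) = θ k / (1 - β k) * (1 - β k) := by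
          ring
        rw [h2, div_mul_cancel₀ _ (hb1 k)]
      · rw [if_neg (fun hh => h hh.symm), if_neg h]
        ring
    rw [h1, Finset.sum_congr rfl fun k _ => h2 k, Finset.sum_sub_distrib,
      Finset.sum_ite_eq' Finset.univ j, ← Finset.mul_sum, ← hσS]
    simp
  refine ⟨hσ0, hwj, ?_⟩
  intro E hE hEne
  have hσE : σ = ∑ k ∈ E, θ k / (1 - β k) := by
    rw [hσ]
    apply Finset.sum_subset hE
    intro k _ hk
    simp only [Finset.mem_filter, Finset.mem_univ, true_and, not_lt] at hk
    have : θ k = 0 := le_antisymm hk (hθ k)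
    simp [this]
  refine ⟨hσE, ?_⟩
  have hsumw : ∑ j ∈ E, w j = σ * (1 - ∑ j ∈ E, β j) := by
    calc ∑ j ∈ E, w j = ∑ j ∈ E, (θ j / (1 - β j) - β j * σ) :=
          Finset.sum_congr rfl fun j _ => hwj j
      _ = (∑ j ∈ E, θ j / (1 - β j)) - (∑ j ∈ E, β j) * σ := by
          rw [Finset.sum_sub_distrib, Finset.sum_mul]
      _ = σ - (∑ j ∈ E, β j) * σ := by rw [← hσE]
      _ = σ * (1 - ∑ j ∈ E, β j) := by ring
  -- 1 - ∑_{j∈E} β j > 0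
  obtain ⟨i, hiE⟩ : ∃ i, i ∉ E := by
    by_contra h
    push_neg at h
    exact hEne (Finset.eq_univ_iff_forall.2 h)
  have hβE : ∑ j ∈ E, β j ≤ ∑ j ∈ Finset.univ.erase i, β j := by
    apply Finset.sum_le_sum_of_subset_of_nonneg
    · intro k hk
      exact Finset.mem_erase.2 ⟨fun h => hiE (h ▸ hk), Finset.mem_univ k⟩
    · intro k _ _; exact le_of_lt (hβ k).1
  have herase : ∑ j ∈ Finset.univ.erase i, β j = 1 - β i := by
    have := Finset.sum_erase_add Finset.univ β (Finset.mem_univ i)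
    linarith [this.symm ▸ hβsum]
  have hlt : ∑ j ∈ E, β j < 1 := by
    have := (hβ i).1
    calc ∑ j ∈ E, β j ≤ 1 - β i := herase ▸ hβE
      _ < 1 := by linarith
  have hne : (1 : ℝ) - ∑ j ∈ E, β j ≠ 0 := by linarith
  rw [hsumw, mul_div_assoc, div_self hne, mul_one]
end

section
/- The convex cone generated by {d_1,…,d_J} equals the hyperplane H = {x ∈ ℝ^J : Σ_{i∈I} x_i = 0}, and the convex cone generated by {d_1,…,d_J, d_{J+1}} equals the closed half-space {x ∈ ℝ^J : Σ_{i∈I} x_i ≥ 0}. -/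
/-- the convex cone generated by `{d_1,…,d_J}` (i.e. the set of nonnegative
linear combinations) equals the hyperplane `H = {x : Σ_i x_i = 0}`, and the convex cone
generated by `{d_1,…,d_J, d_{J+1}}` equals the half-space `{x : Σ_i x_i ≥ 0}`. -/
theorem gps_cones_eq_hyperplane_and_halfspace
    (J : ℕ) (hJ : 2 ≤ J) (β : Fin J → ℝ)
    (hβ : ∀ i, 0 < β i ∧ β i < 1) (hβsum : ∑ i, β i = 1)
    (d : Fin J → Fin J → ℝ)
    (hd : ∀ i j, d i j = if j = i then 1 else -(β j) / (1 - β i))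
    (dlast : Fin J → ℝ) (hdlast : ∀ i, dlast i = (Real.sqrt J)⁻¹) :
    {x : Fin J → ℝ | ∃ θ : Fin J → ℝ, (∀ k, 0 ≤ θ k) ∧ x = ∑ k, θ k • d k}
        = {x : Fin J → ℝ | ∑ i, x i = 0} ∧
    {x : Fin J → ℝ | ∃ θ : Fin J → ℝ, ∃ t : ℝ, (∀ k, 0 ≤ θ k) ∧ 0 ≤ t ∧
        x = (∑ k, θ k • d k) + t • dlast}
        = {x : Fin J → ℝ | 0 ≤ ∑ i, x i} := by
  have hβ0 : ∀ i, 0 < β i := fun i => (hβ i).1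
  have h1β : ∀ i, (0:ℝ) < 1 - β i := fun i => by linarith [(hβ i).2]
  -- each direction d i sums to zero
  have hdsum : ∀ i, ∑ j, d i j = 0 := by
    intro i
    rw [← Finset.add_sum_erase _ _ (Finset.mem_univ i)]
    have h1 : d i i = 1 := by rw [hd]; simp
    have h2 : ∑ j ∈ Finset.univ.erase i, d i j
        = (∑ j ∈ Finset.univ.erase i, -(β j)) / (1 - β i) := by
      rw [Finset.sum_div]
      exact Finset.sum_congr rfl fun j hj => by
        rw [hd, if_neg (Finset.ne_of_mem_erase hj)]
    have h3 : ∑ j ∈ Finset.univ.erase i, β j = 1 - β i := by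
      rw [← Finset.add_sum_erase _ _ (Finset.mem_univ i)] at hβsum
      linarith
    rw [h1, h2, Finset.sum_neg_distrib, h3]
    rw [neg_div, div_self (h1β i).ne']
    ring
  -- sums of nonneg combinations have coordinate-sum zero
  have hsumcomb : ∀ θ : Fin J → ℝ, ∑ i, (∑ k, θ k • d k) i = 0 := by
    intro θ
    simp only [Finset.sum_apply, Pi.smul_apply, smul_eq_mul]
    rw [Finset.sum_comm]
    simp [← Finset.mul_sum, hdsum]
  -- key: every x with coordinate-sum zero is a nonneg combination
  have key : ∀ x : Fin J → ℝ, ∑ i, x i = 0 →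
      ∃ θ : Fin J → ℝ, (∀ k, 0 ≤ θ k) ∧ x = ∑ k, θ k • d k := by
    intro x hx
    set t := ∑ j, |x j| / β j with ht
    have htj : ∀ j, |x j| ≤ β j * t := by
      intro j
      have h1 : |x j| / β j ≤ t :=
        Finset.single_le_sum (f := fun k => |x k| / β k)
          (fun k _ => div_nonneg (abs_nonneg _) (hβ0 k).le) (Finset.mem_univ j)
      have h2 : β j * (|x j| / β j) = |x j| := by
        rw [mul_comm, div_mul_cancel₀ _ (hβ0 j).ne']
      calc |x j| = β j * (|x j| / β j) := h2.symm
        _ ≤ β j * t := mul_le_mul_of_nonneg_left h1 (hβ0 j).le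
    refine ⟨fun k => (1 - β k) * (x k + β k * t), fun k => ?_, ?_⟩
    · show 0 ≤ (1 - β k) * (x k + β k * t)
      have h2 : 0 ≤ x k + β k * t := by nlinarith [htj k, neg_abs_le (x k)]
      exact mul_nonneg (h1β k).le h2
    · funext j
      simp only [Finset.sum_apply, Pi.smul_apply, smul_eq_mul]
      rw [← Finset.add_sum_erase _ _ (Finset.mem_univ j)]
      have hdjj : d j j = 1 := by rw [hd]; simp
      have hrest : ∑ k ∈ Finset.univ.erase j, (1 - β k) * (x k + β k * t) * d k j
          = ∑ k ∈ Finset.univ.erase j, (-(β j)) * (x k + β k * t) := by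
        refine Finset.sum_congr rfl fun k hk => ?_
        rw [hd, if_neg ((Finset.ne_of_mem_erase hk).symm)]
        have := (h1β k).ne'
        field_simp
      have hsum2 : ∑ k ∈ Finset.univ.erase j, (x k + β k * t) = t - (x j + β j * t) := by
        have := Finset.sum_erase_eq_sub (f := fun k => x k + β k * t) (Finset.mem_univ j)
        rw [this, Finset.sum_add_distrib, hx, ← Finset.sum_mul, hβsum]
        ring
      rw [hdjj, hrest, ← Finset.mul_sum, hsum2]
      ring
  have hdlsum : ∑ i, dlast i = (J : ℝ) * (Real.sqrt J)⁻¹ := by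
    simp [hdlast, mul_comm]
  have hJpos : (0:ℝ) < (J : ℝ) := by
    exact_mod_cast Nat.lt_of_lt_of_le Nat.zero_lt_two hJ
  have hs : (0:ℝ) < (J : ℝ) * (Real.sqrt J)⁻¹ := by
    have h := Real.sqrt_pos.mpr hJpos
    positivity
  constructor
  · ext x
    constructor
    · rintro ⟨θ, hθ, rfl⟩
      exact hsumcomb θ
    · exact fun hx => key x hx
  · ext x
    constructor
    · rintro ⟨θ, t, hθ, htn, rfl⟩
      have h1 : ∑ i, ((∑ k, θ k • d k) + t • dlast) i
          = (∑ i, (∑ k, θ k • d k) i) + t * ((J:ℝ) * (Real.sqrt J)⁻¹) := by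
        simp only [Pi.add_apply, Pi.smul_apply, smul_eq_mul, Finset.sum_add_distrib,
          ← Finset.mul_sum, hdlsum]
      simp only [Set.mem_setOf_eq, h1, hsumcomb θ, zero_add]
      exact mul_nonneg htn hs.le
    · intro hx
      simp only [Set.mem_setOf_eq] at hx
      set t := (∑ i, x i) / ((J:ℝ) * (Real.sqrt J)⁻¹) with htdef
      have htn : 0 ≤ t := div_nonneg hx hs.le
      have hy : ∑ i, (x - t • dlast) i = 0 := by
        simp only [Pi.sub_apply, Pi.smul_apply, smul_eq_mul, Finset.sum_sub_distrib,
          ← Finset.mul_sum, hdlsum, htdef]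
        field_simp
        ring
      obtain ⟨θ, hθ, hθeq⟩ := key _ hy
      exact ⟨θ, t, hθ, htn, by rw [← hθeq]; abel⟩
end

section
/- Let w ∈ ℝ^J and suppose θ, θ̃ ∈ ℝ_+^{J+1} satisfy w = Σ_{k=1}^{J+1} θ_k d_k = Σ_{k=1}^{J+1} θ̃_k d_k, with {k ∈ I : θ_k > 0} ≠ I and {k ∈ I : θ̃_k > 0} ≠ I. Then θ = θ̃. Moreover, θ_{J+1} = ⟨w, d_{J+1}⟩ (the Euclidean inner product), so θ_{J+1} > 0 if and only if Σ_{i∈I} w_i > 0. -/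
/-- uniqueness of the nonnegative representation
`w = Σ_{k=1}^{J} θ_k d_k + θ_{J+1} d_{J+1}` when the support of `(θ_k)_{k∈I}` is not all
of `I`, together with `θ_{J+1} = ⟨w, d_{J+1}⟩` and `θ_{J+1} > 0 ↔ Σ_i w_i > 0`. -/
theorem gps_unique_representation_with_dlast
    (J : ℕ) (hJ : 2 ≤ J) (β : Fin J → ℝ)
    (hβ : ∀ i, 0 < β i ∧ β i < 1) (hβsum : ∑ i, β i = 1)
    (d : Fin J → Fin J → ℝ)
    (hd : ∀ i j, d i j = if j = i then 1 else -(β j) / (1 - β i))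
    (dlast : Fin J → ℝ) (hdlast : ∀ i, dlast i = (Real.sqrt J)⁻¹)
    (w : Fin J → ℝ) (θ θ' : Fin J → ℝ) (t t' : ℝ)
    (hθ : ∀ k, 0 ≤ θ k) (ht : 0 ≤ t)
    (hθ' : ∀ k, 0 ≤ θ' k) (ht' : 0 ≤ t')
    (hrep : w = (∑ k, θ k • d k) + t • dlast)
    (hrep' : w = (∑ k, θ' k • d k) + t' • dlast)
    (hsupp : {k : Fin J | 0 < θ k} ≠ Set.univ)
    (hsupp' : {k : Fin J | 0 < θ' k} ≠ Set.univ) :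
    θ = θ' ∧ t = t' ∧
    t = ∑ i, w i * dlast i ∧
    (0 < t ↔ 0 < ∑ i, w i) := by
  have hβpos : ∀ i, 0 < β i := fun i => (hβ i).1
  have h1β : ∀ i, (0:ℝ) < 1 - β i := fun i => by linarith [(hβ i).2]
  have h1βne : ∀ i, (1:ℝ) - β i ≠ 0 := fun i => ne_of_gt (h1β i)
  have hJpos : (0:ℝ) < (J:ℝ) := by
    have : 0 < J := by omega
    exact_mod_cast this
  have hsq : (0:ℝ) < Real.sqrt J := Real.sqrt_pos.2 hJpos
  have hsqsq : Real.sqrt J * Real.sqrt J = (J:ℝ) := Real.mul_self_sqrt (le_of_lt hJpos)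
  -- each d k sums to zero
  have sum_d : ∀ k, ∑ j, d k j = 0 := by
    intro k
    have h2 : ∑ j, d k j = d k k + ∑ j ∈ Finset.univ.erase k, d k j :=
      (Finset.add_sum_erase _ _ (Finset.mem_univ k)).symm
    have h3 : d k k = 1 := by simp [hd]
    have h4 : ∑ j ∈ Finset.univ.erase k, d k j
        = (∑ j ∈ Finset.univ.erase k, β j) * (-(1 - β k)⁻¹) := by
      rw [Finset.sum_mul]
      apply Finset.sum_congr rfl
      intro j hj
      have hjk : j ≠ k := (Finset.mem_erase.1 hj).1
      rw [hd]
      simp [hjk]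
      ring
    have h5 : ∑ j ∈ Finset.univ.erase k, β j = 1 - β k := by
      have := Finset.sum_erase_eq_sub (f := β) (Finset.mem_univ k)
      rw [this, hβsum]
    rw [h2, h3, h4, h5]
    field_simp [h1βne k]
    norm_num
  -- component formula
  have comp : ∀ (φ : Fin J → ℝ) (j : Fin J),
      (∑ k, φ k • d k) j = φ j / (1 - β j) - β j * (∑ k, φ k / (1 - β k)) := by
    intro φ j
    have h1 : (∑ k, φ k • d k) j = ∑ k, φ k * d k j := by
      simp [Finset.sum_apply]
    rw [h1]
    have h2 : ∑ k, φ k * d k j = φ j * d j j + ∑ k ∈ Finset.univ.erase j, φ k * d k j :=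
      (Finset.add_sum_erase _ _ (Finset.mem_univ j)).symm
    have h3 : d j j = 1 := by simp [hd]
    have h4 : ∑ k ∈ Finset.univ.erase j, φ k * d k j
        = -(β j) * ∑ k ∈ Finset.univ.erase j, φ k / (1 - β k) := by
      rw [Finset.mul_sum]
      apply Finset.sum_congr rfl
      intro k hk
      have hkj : j ≠ k := fun e => (Finset.mem_erase.1 hk).1 e.symm
      rw [hd]
      simp [hkj]
      ring
    have h5 : ∑ k ∈ Finset.univ.erase j, φ k / (1 - β k)
        = (∑ k, φ k / (1 - β k)) - φ j / (1 - β j) :=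
      Finset.sum_erase_eq_sub (Finset.mem_univ j)
    rw [h2, h3, h4, h5]
    have := h1βne j
    field_simp
    ring
  -- sum formula
  have sum_rep : ∀ (φ : Fin J → ℝ) (s : ℝ),
      w = (∑ k, φ k • d k) + s • dlast → ∑ i, w i = s * Real.sqrt J := by
    intro φ s h
    have h0 : ∑ i, w i = ∑ i, ((∑ k, φ k * d k i) + s * (Real.sqrt J)⁻¹) := by
      apply Finset.sum_congr rfl
      intro i _
      rw [h]
      simp [Finset.sum_apply, hdlast]
    rw [h0, Finset.sum_add_distrib]
    have h1 : ∑ i, ∑ k, φ k * d k i = ∑ k, φ k * (∑ i, d k i) := by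
      rw [Finset.sum_comm]
      simp [Finset.mul_sum]
    have h2 : ∀ k, φ k * (∑ i, d k i) = 0 := by
      intro k; rw [sum_d k]; ring
    rw [h1, Finset.sum_eq_zero (fun k _ => h2 k), zero_add,
      Finset.sum_const, Finset.card_univ, Fintype.card_fin, nsmul_eq_mul, ← hsqsq]
    field_simp [ne_of_gt hsq]
    rw [Real.sqrt_sq hsq.le]
    ring
  have hw : ∑ i, w i = t * Real.sqrt J := sum_rep θ t hrep
  have hw' : ∑ i, w i = t' * Real.sqrt J := sum_rep θ' t' hrep'
  have htt' : t = t' := by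
    have := hw.symm.trans hw'
    exact mul_right_cancel₀ (ne_of_gt hsq) this
  have hteq : t = ∑ i, w i * dlast i := by
    have : ∑ i, w i * dlast i = (∑ i, w i) * (Real.sqrt J)⁻¹ := by
      simp_rw [hdlast]
      rw [← Finset.sum_mul]
    rw [this, hw]
    field_simp
  -- uniqueness of θ
  set C := ∑ k, θ k / (1 - β k) with hC
  set C' := ∑ k, θ' k / (1 - β k) with hC'
  have key : ∀ j, θ j / (1 - β j) - β j * C = θ' j / (1 - β j) - β j * C' := by
    intro j
    have e1 := congrFun hrep j
    have e2 := congrFun hrep' j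
    rw [Pi.add_apply, Pi.smul_apply, smul_eq_mul, comp θ j] at e1
    rw [Pi.add_apply, Pi.smul_apply, smul_eq_mul, comp θ' j] at e2
    rw [htt'] at e1
    linarith [e1.symm.trans e2]
  obtain ⟨j0, hj0⟩ := Set.ne_univ_iff_exists_notMem _ |>.1 hsupp
  obtain ⟨j1, hj1⟩ := Set.ne_univ_iff_exists_notMem _ |>.1 hsupp'
  have hθ0 : θ j0 = 0 := le_antisymm (not_lt.1 hj0) (hθ j0)
  have hθ1 : θ' j1 = 0 := le_antisymm (not_lt.1 hj1) (hθ' j1)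
  have hCC' : C = C' := by
    have k0 := key j0
    have k1 := key j1
    rw [hθ0] at k0
    rw [hθ1] at k1
    simp only [zero_div] at k0 k1
    have d0 : 0 ≤ θ' j0 / (1 - β j0) := div_nonneg (hθ' j0) (le_of_lt (h1β j0))
    have d1 : 0 ≤ θ j1 / (1 - β j1) := div_nonneg (hθ j1) (le_of_lt (h1β j1))
    have b0 := hβpos j0
    have b1 := hβpos j1
    nlinarith [k0, k1]
  have hθθ' : θ = θ' := by
    funext j
    have h := key j
    rw [hCC'] at h
    have h2 : θ j / (1 - β j) = θ' j / (1 - β j) := by linarith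
    field_simp [h1βne j] at h2
    exact h2
  refine ⟨hθθ', htt', hteq, ?_⟩
  rw [hw]
  constructor
  · intro h; exact mul_pos h hsq
  · intro h; nlinarith [hsq]
end

section
/- Comparison principle for the GPS projection: let ν̃, ν ∈ ℝ^J with ν̃_i ≤ ν_i for every i ∈ I, let κ̃ ∈ ℝ_+^J be a GPS projection of ν̃ and let κ ∈ ℝ_+^J be a GPS projection of ν. Then κ̃_i ≤ κ_i for every i ∈ I. -/
/-- The GPS direction of constraint `d_i = e_i − Σ_{j≠i} (β_j/(1−β_i)) e_j`. -/
noncomputable def gpsD {J : ℕ} (β : Fin J → ℝ) (i : Fin J) : Fin J → ℝ :=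
  fun j => if j = i then 1 else -(β j) / (1 - β i)

/-- The extra direction `d_{J+1} = (1/√J) Σ_i e_i`. -/
noncomputable def gpsDlast (J : ℕ) : Fin J → ℝ := fun _ => (Real.sqrt J)⁻¹

/-- The set `d(x)` of allowable directions of constraint at `x ∈ ℝ_+^J`:
nonnegative combinations of the `d_i` with `i ∈ I(x) = {i : x_i = 0}`, where `d_{J+1}`
is also allowed when `x = 0`. -/
noncomputable def gpsDirSet {J : ℕ} (β : Fin J → ℝ) (x : Fin J → ℝ) :
    Set (Fin J → ℝ) :=
  {w | (x = 0 ∧ ∃ a : Fin J → ℝ, ∃ b : ℝ, (∀ i, 0 ≤ a i) ∧ 0 ≤ b ∧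
          w = (∑ i, a i • gpsD β i) + b • gpsDlast J) ∨
       (x ≠ 0 ∧ ∃ a : Fin J → ℝ, (∀ i, 0 ≤ a i) ∧ (∀ i, x i ≠ 0 → a i = 0) ∧
          w = ∑ i, a i • gpsD β i)}

/-- `κ ∈ ℝ_+^J` is a GPS projection of `ν ∈ ℝ^J` if either `ν ∈ ℝ_+^J` and `κ = ν`, or
`ν ∉ ℝ_+^J`, `κ` lies on the boundary of `ℝ_+^J`, and `κ − ν ∈ d(κ)`. -/
noncomputable def IsGPSProj {J : ℕ} (β : Fin J → ℝ) (ν κ : Fin J → ℝ) : Prop :=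
  (∀ i, 0 ≤ κ i) ∧
  (((∀ i, 0 ≤ ν i) ∧ κ = ν) ∨
   ((¬ ∀ i, 0 ≤ ν i) ∧ (∃ i, κ i = 0) ∧ (κ - ν) ∈ gpsDirSet β κ))

/-- Uniform representation of a GPS projection. -/
lemma gps_rep {J : ℕ} (β : Fin J → ℝ) (ν κ : Fin J → ℝ)
    (h : IsGPSProj β ν κ) :
    ∃ a : Fin J → ℝ, ∃ B : ℝ, (∀ i, 0 ≤ a i) ∧ (∀ i, κ i ≠ 0 → a i = 0) ∧
      0 ≤ B ∧ (κ ≠ 0 → B = 0) ∧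
      ∀ i, κ i - ν i = (∑ j, a j • gpsD β j) i + B := by
  obtain ⟨hκpos, h2⟩ := h
  rcases h2 with ⟨hν, hκν⟩ | ⟨_, _, hw⟩
  · refine ⟨0, 0, fun i => le_refl _, fun i _ => rfl, le_refl _, fun _ => rfl, ?_⟩
    intro i
    subst hκν
    simp
  · rcases hw with ⟨hκ0, a, b, ha, hb, heq⟩ | ⟨hκne, a, ha, hz, heq⟩
    · refine ⟨a, b * (Real.sqrt J)⁻¹, ha, fun i hi => absurd (by rw [hκ0]; rfl) hi,
        mul_nonneg hb (inv_nonneg.2 (Real.sqrt_nonneg _)), fun h => absurd hκ0 h, ?_⟩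
      intro i
      have := congrFun heq i
      simpa [gpsDlast, Pi.sub_apply, Pi.add_apply] using this
    · refine ⟨a, 0, ha, hz, le_refl _, fun _ => rfl, ?_⟩
      intro i
      have := congrFun heq i
      simpa using this

/-- Component formula for a nonnegative combination of GPS directions. -/
lemma gps_sum_comp {J : ℕ} (β : Fin J → ℝ) (hβ : ∀ i, 0 < β i ∧ β i < 1)
    (a : Fin J → ℝ) (i : Fin J) :
    (∑ j, a j • gpsD β j) i = a i / (1 - β i) - β i * ∑ j, a j / (1 - β j) := by
  have h1 : ∀ j, (1 : ℝ) - β j ≠ 0 := fun j => by have := (hβ j).2; intro h; linarith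
  have happ : (∑ j, a j • gpsD β j) i = ∑ j, a j * gpsD β j i := by
    simp [Finset.sum_apply]
  rw [happ]
  have key : ∀ j : Fin J, a j * gpsD β j i
      = (if j = i then a i / (1 - β i) else 0) - β i * (a j / (1 - β j)) := by
    intro j
    by_cases hji : j = i
    · subst hji
      simp only [gpsD, if_pos rfl, if_pos rfl, mul_one, ↓reduceIte]
      have hne := h1 j
      field_simp
    · rw [if_neg hji]
      have : gpsD β j i = -(β i) / (1 - β j) := by
        simp only [gpsD]
        rw [if_neg (fun h => hji h.symm)]
      rw [this]
      have hne := h1 j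
      field_simp
      ring
  rw [Finset.sum_congr rfl (fun j _ => key j)]
  rw [Finset.sum_sub_distrib, Finset.sum_ite_eq' Finset.univ i, ← Finset.mul_sum]
  simp

/-- comparison principle for the GPS projection: if `ν̃ ≤ ν`
componentwise, `κ̃` is a GPS projection of `ν̃` and `κ` is a GPS projection of `ν`,
then `κ̃ ≤ κ` componentwise. -/
theorem gps_projection_comparison
    (J : ℕ) (hJ : 2 ≤ J) (β : Fin J → ℝ)
    (hβ : ∀ i, 0 < β i ∧ β i < 1) (hβsum : ∑ i, β i = 1)
    (ν' ν κ' κ : Fin J → ℝ) (hle : ∀ i, ν' i ≤ ν i)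
    (hproj' : IsGPSProj β ν' κ') (hproj : IsGPSProj β ν κ) :
    ∀ i, κ' i ≤ κ i := by
  intro i0
  by_contra hcon
  push_neg at hcon
  have hκpos := hproj.1
  have hκ'pos := hproj'.1
  obtain ⟨a', B', ha', hz', hB', hB'0, hE'⟩ := gps_rep β ν' κ' hproj'
  obtain ⟨a, B, ha, hz, hB, hB0, hE⟩ := gps_rep β ν κ hproj
  have h1 : ∀ j, (0:ℝ) < 1 - β j := fun j => by have := (hβ j).2; linarith
  -- κ' i0 > 0, so κ' ≠ 0 and a' i0 = 0 and B' = 0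
  have hκ'i0 : 0 < κ' i0 := lt_of_le_of_lt (hκpos i0) hcon
  have hκ'ne : κ' ≠ 0 := fun h => by rw [h] at hκ'i0; exact lt_irrefl 0 hκ'i0
  have hB'z : B' = 0 := hB'0 hκ'ne
  have ha'i0 : a' i0 = 0 := hz' i0 (ne_of_gt hκ'i0)
  set c : ℝ := ∑ j, a j / (1 - β j) with hc
  set c' : ℝ := ∑ j, a' j / (1 - β j) with hc'
  -- component equations
  have E : ∀ i, κ i - ν i = a i / (1 - β i) - β i * c + B := by
    intro i
    rw [hE i, gps_sum_comp β hβ a i]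
  have E' : ∀ i, κ' i - ν' i = a' i / (1 - β i) - β i * c' := by
    intro i
    rw [hE' i, gps_sum_comp β hβ a' i, hB'z, add_zero]
  -- step 1 : c' < c
  have key0 : 0 < β i0 * (c - c') - a i0 / (1 - β i0) + (ν' i0 - ν i0) - B := by
    have e1 := E i0
    have e2 := E' i0
    rw [ha'i0] at e2
    simp only [zero_div] at e2
    linarith
  have hcc' : c' < c := by
    have hai0 : 0 ≤ a i0 / (1 - β i0) := div_nonneg (ha i0) (le_of_lt (h1 i0))
    have hν0 := hle i0
    by_contra hcc
    push_neg at hcc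
    have : β i0 * (c - c') ≤ 0 :=
      mul_nonpos_of_nonneg_of_nonpos (le_of_lt (hβ i0).1) (by linarith)
    linarith
  -- step 2 : pointwise bound
  have step2 : ∀ j, a j / (1 - β j) - a' j / (1 - β j) ≤ β j * (c - c') := by
    intro j
    have hrhs : 0 ≤ β j * (c - c') :=
      mul_nonneg (le_of_lt (hβ j).1) (by linarith)
    by_cases haj : a j ≤ a' j
    · have : a j / (1 - β j) ≤ a' j / (1 - β j) :=
        (div_le_div_iff_of_pos_right (h1 j)).mpr haj
      linarith
    · push_neg at haj
      have haj0 : a j ≠ 0 := by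
        have := ha' j; intro h; rw [h] at haj; linarith
      have hκj : κ j = 0 := by
        by_contra h; exact haj0 (hz j h)
      have e1 := E j
      have e2 := E' j
      have hκ'j := hκ'pos j
      have hνj := hle j
      rw [hκj] at e1
      linarith
  -- step 3 : sum over j ≠ i0
  have hsum1 : ∑ j ∈ Finset.univ.erase i0, (a j / (1 - β j) - a' j / (1 - β j))
      = (c - c') - a i0 / (1 - β i0) := by
    rw [Finset.sum_sub_distrib]
    rw [Finset.sum_erase_eq_sub (Finset.mem_univ i0),
        Finset.sum_erase_eq_sub (Finset.mem_univ i0)]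
    rw [ha'i0]
    simp only [zero_div, sub_zero]
    rw [hc, hc']
    ring
  have hsum2 : ∑ j ∈ Finset.univ.erase i0, β j * (c - c')
      = (1 - β i0) * (c - c') := by
    rw [← Finset.sum_mul]
    rw [Finset.sum_erase_eq_sub (Finset.mem_univ i0), hβsum]
  have hsumle : (c - c') - a i0 / (1 - β i0) ≤ (1 - β i0) * (c - c') := by
    rw [← hsum1, ← hsum2]
    exact Finset.sum_le_sum (fun j _ => step2 j)
  have hfin : β i0 * (c - c') ≤ a i0 / (1 - β i0) := by nlinarith
  have hν0 := hle i0
  linarith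
end

section
/- If κ ∈ ℝ_+^J is a GPS projection of ν ∈ ℝ^J, then Σ_{j∈I} κ_j = max(Σ_{j∈I} ν_j, 0). In particular, if Σ_{j∈I} ν_j ≤ 0 and ν ∉ ℝ_+^J, then every GPS projection of ν equals 0. -/
lemma sum_gpsD {J : ℕ} (β : Fin J → ℝ) (hβ : ∀ i, 0 < β i ∧ β i < 1)
    (hβsum : ∑ i, β i = 1) (i : Fin J) : ∑ j, gpsD β i j = 0 := by
  have hne : (1 : ℝ) - β i ≠ 0 := by have := (hβ i).2; intro h; linarith
  have herase : ∑ j ∈ Finset.univ.erase i, β j = 1 - β i := by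
    have h := Finset.sum_erase_add Finset.univ β (Finset.mem_univ i)
    rw [hβsum] at h; linarith
  have h := Finset.sum_erase_add Finset.univ (gpsD β i) (Finset.mem_univ i)
  have h1 : gpsD β i i = 1 := by simp [gpsD]
  have h2 : ∑ j ∈ Finset.univ.erase i, gpsD β i j = -1 := by
    have heq : ∀ j ∈ Finset.univ.erase i, gpsD β i j = -(β j) / (1 - β i) := by
      intro j hj
      have hji : j ≠ i := Finset.ne_of_mem_erase hj
      simp [gpsD, hji]
    rw [Finset.sum_congr rfl heq, ← Finset.sum_div, Finset.sum_neg_distrib, herase]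
    field_simp
  rw [← h, h1, h2]; ring

/-- if `κ` is a GPS projection of `ν`, then `Σ_j κ_j = max(Σ_j ν_j, 0)`;
in particular, if `Σ_j ν_j ≤ 0` and `ν ∉ ℝ_+^J`, then `κ = 0`. -/
theorem gps_projection_sum
    (J : ℕ) (hJ : 2 ≤ J) (β : Fin J → ℝ)
    (hβ : ∀ i, 0 < β i ∧ β i < 1) (hβsum : ∑ i, β i = 1)
    (ν κ : Fin J → ℝ) (hproj : IsGPSProj β ν κ) :
    ∑ j, κ j = max (∑ j, ν j) 0 ∧
    ((∑ j, ν j ≤ 0 ∧ ¬ ∀ i, 0 ≤ ν i) → κ = 0) := by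
  obtain ⟨hκ, hcase⟩ := hproj
  rcases hcase with ⟨hν, hkv⟩ | ⟨hνneg, ⟨i0, hi0⟩, hdir⟩
  · subst hkv
    refine ⟨?_, ?_⟩
    · have h : 0 ≤ ∑ j, κ j := Finset.sum_nonneg fun j _ => hκ j
      rw [max_eq_left h]
    · rintro ⟨_, h2⟩; exact absurd hκ h2
  · -- helper: sum of ∑ i, a i • gpsD β i is 0
    have hDsum : ∀ a : Fin J → ℝ, ∑ j, (∑ i, a i • gpsD β i) j = 0 := by
      intro a
      have : ∀ j : Fin J, (∑ i, a i • gpsD β i) j = ∑ i, a i * gpsD β i j := by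
        intro j; simp [Finset.sum_apply]
      simp_rw [this]
      rw [Finset.sum_comm]
      have : ∀ i : Fin J, ∑ j, a i * gpsD β i j = 0 := by
        intro i; rw [← Finset.mul_sum, sum_gpsD β hβ hβsum i, mul_zero]
      simp [this]
    rcases hdir with ⟨hκ0, a, b, ha, hb, hw⟩ | ⟨hκne, a, ha, hz, hw⟩
    · -- κ = 0
      subst hκ0
      have hsum : ∑ j, ((0 : Fin J → ℝ) - ν) j = b * Real.sqrt J := by
        rw [hw]
        have : ∀ j : Fin J, ((∑ i, a i • gpsD β i) + b • gpsDlast J) j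
            = (∑ i, a i • gpsD β i) j + b * (Real.sqrt J)⁻¹ := by
          intro j; simp [gpsDlast]
        simp_rw [this]
        rw [Finset.sum_add_distrib, hDsum, Finset.sum_const, zero_add]
        have hJ0 : (0:ℝ) ≤ (J:ℝ) := Nat.cast_nonneg J
        have hsq : Real.sqrt J * Real.sqrt J = (J:ℝ) := Real.mul_self_sqrt hJ0
        have hsqne : Real.sqrt J ≠ 0 := by
          have : (0:ℝ) < (J:ℝ) := by exact_mod_cast Nat.lt_of_lt_of_le Nat.zero_lt_two hJ
          exact ne_of_gt (Real.sqrt_pos.mpr this)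
        simp only [Finset.card_univ, Fintype.card_fin, nsmul_eq_mul]
        field_simp
        nlinarith [hsq]
      have hν0 : ∑ j, ν j ≤ 0 := by
        have h1 : ∑ j, ((0 : Fin J → ℝ) - ν) j = -∑ j, ν j := by
          simp [Finset.sum_neg_distrib]
        have hbs : 0 ≤ b * Real.sqrt J := mul_nonneg hb (Real.sqrt_nonneg _)
        linarith [hsum, h1.symm ▸ hsum]
      constructor
      · rw [max_eq_right hν0]; simp
      · intro _; rfl
    · -- κ ≠ 0
      have hsum : ∑ j, (κ - ν) j = 0 := by rw [hw]; exact hDsum a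
      have heq : ∑ j, κ j = ∑ j, ν j := by
        have : ∑ j, (κ j - ν j) = 0 := hsum
        rw [Finset.sum_sub_distrib] at this
        linarith
      have hpos : 0 < ∑ j, κ j := by
        obtain ⟨j, hj⟩ := Function.ne_iff.mp hκne
        refine Finset.sum_pos' (fun k _ => hκ k) ⟨j, Finset.mem_univ j, ?_⟩
        have := hκ j
        rcases lt_or_eq_of_le this with h | h
        · exact h
        · exact absurd h.symm (by simpa using hj)
      constructor
      · rw [heq, max_eq_left (by linarith)]
      · rintro ⟨h1, _⟩; exfalso; rw [heq] at hpos; linarith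
end

section
/- Let ν ∈ ℝ^J, let χ ∈ ℝ_+^J, and let θ ∈ ℝ_+^J be such that χ = ν + Σ_{k∈I} θ_k d_k, and such that the support S := {k ∈ I : θ_k > 0} satisfies S ⊆ {k ∈ I : χ_k = 0} and S ≠ I. Then 0 ≤ Σ_{k∈S} θ_k/(1−β_k) = (−Σ_{k∈S} ν_k)/(1 − Σ_{k∈S} β_k), and for every j ∈ I: if θ_j > 0 then ν_j = −θ_j/(1−β_j) + β_j·(−Σ_{k∈S} ν_k)/(1 − Σ_{k∈S} β_k), while if θ_j = 0 then ν_j = χ_j + β_j·(−Σ_{k∈S} ν_k)/(1 − Σ_{k∈S} β_k). -/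
/-- if `χ = ν + Σ_k θ_k d_k` with `χ ∈ ℝ_+^J`, `θ ∈ ℝ_+^J`, and the support
`S = {k : θ_k > 0}` satisfies `S ⊆ {k : χ_k = 0}` and `S ≠ I`, then
`0 ≤ Σ_{k∈S} θ_k/(1−β_k) = (−Σ_{k∈S} ν_k)/(1 − Σ_{k∈S} β_k)` and the stated formulas
for `ν_j` hold for every `j`. -/
theorem gps_affine_image_formulas
    (J : ℕ) (hJ : 2 ≤ J) (β : Fin J → ℝ)
    (hβ : ∀ i, 0 < β i ∧ β i < 1) (hβsum : ∑ i, β i = 1)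
    (d : Fin J → Fin J → ℝ)
    (hd : ∀ i j, d i j = if j = i then 1 else -(β j) / (1 - β i))
    (ν χ θ : Fin J → ℝ) (hχ : ∀ k, 0 ≤ χ k) (hθ : ∀ k, 0 ≤ θ k)
    (hrep : χ = ν + ∑ k, θ k • d k)
    (S : Finset (Fin J)) (hS : S = Finset.univ.filter (fun k => 0 < θ k))
    (hsupp : ∀ k ∈ S, χ k = 0) (hSne : S ≠ Finset.univ) :
    0 ≤ ∑ k ∈ S, θ k / (1 - β k) ∧
    ∑ k ∈ S, θ k / (1 - β k) = (-∑ k ∈ S, ν k) / (1 - ∑ k ∈ S, β k) ∧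
    ∀ j : Fin J,
      (0 < θ j →
        ν j = -(θ j / (1 - β j)) + β j * ((-∑ k ∈ S, ν k) / (1 - ∑ k ∈ S, β k))) ∧
      (θ j = 0 →
        ν j = χ j + β j * ((-∑ k ∈ S, ν k) / (1 - ∑ k ∈ S, β k))) := by
  have hβ1 : ∀ k : Fin J, (1 : ℝ) - β k ≠ 0 := by
    intro k; have := (hβ k).2; intro h; linarith
  set T := ∑ k ∈ S, θ k / (1 - β k) with hT
  have hθ0 : ∀ k, k ∉ S → θ k = 0 := by
    intro k hk
    rw [hS] at hk
    simp only [Finset.mem_filter, Finset.mem_univ, true_and, not_lt] at hk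
    exact le_antisymm hk (hθ k)
  have hTuniv : T = ∑ k, θ k / (1 - β k) := by
    rw [hT]
    apply Finset.sum_subset (Finset.subset_univ S)
    intro k _ hk
    rw [hθ0 k hk, zero_div]
  -- key pointwise formula
  have hνformula : ∀ j, ν j = χ j - θ j / (1 - β j) + β j * T := by
    intro j
    have h1 : χ j = ν j + ∑ k, θ k * d k j := by
      have := congrFun hrep j
      simpa [Finset.sum_apply] using this
    have h2 : ∑ k, θ k * d k j
        = ∑ k, ((if k = j then θ j / (1 - β j) else 0) - β j * (θ k / (1 - β k))) := by
      apply Finset.sum_congr rfl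
      intro k _
      rw [hd]
      by_cases hkj : k = j
      · subst hkj
        rw [if_pos rfl, if_pos rfl]
        field_simp [hβ1 k]
      · rw [if_neg (fun h => hkj h.symm), if_neg hkj]
        ring

    have h3 : ∑ k, θ k * d k j = θ j / (1 - β j) - β j * T := by
      rw [h2, Finset.sum_sub_distrib, Finset.sum_ite_eq' Finset.univ j
        (fun _ => θ j / (1 - β j)), if_pos (Finset.mem_univ j), ← Finset.mul_sum, hTuniv]
    rw [h3] at h1
    linarith [h1]
  have hsumν : ∑ k ∈ S, ν k = -T + T * (∑ k ∈ S, β k) := by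
    have : ∑ k ∈ S, ν k = ∑ k ∈ S, (χ k - θ k / (1 - β k) + β k * T) :=
      Finset.sum_congr rfl (fun k _ => hνformula k)
    rw [this]
    have hχ0 : ∑ k ∈ S, χ k = 0 := Finset.sum_eq_zero hsupp
    rw [Finset.sum_add_distrib, Finset.sum_sub_distrib, hχ0, ← hT, ← Finset.sum_mul]
    ring
  have hβSlt : ∑ k ∈ S, β k < 1 := by
    obtain ⟨i, hi⟩ : ∃ i, i ∉ S := by
      by_contra h
      push_neg at h
      exact hSne (Finset.eq_univ_iff_forall.mpr h)
    calc ∑ k ∈ S, β k < ∑ k, β k := by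
          apply Finset.sum_lt_sum_of_subset (Finset.subset_univ S)
            (Finset.mem_univ i) hi (hβ i).1
          intro j _ _
          exact le_of_lt (hβ j).1
      _ = 1 := hβsum
  have hden : (1 : ℝ) - ∑ k ∈ S, β k ≠ 0 := by
    intro h; linarith
  have hTnonneg : 0 ≤ T := by
    apply Finset.sum_nonneg
    intro k _
    apply div_nonneg (hθ k)
    have := (hβ k).2; linarith
  have hTeq : T = (-∑ k ∈ S, ν k) / (1 - ∑ k ∈ S, β k) := by
    rw [eq_div_iff hden]
    rw [hsumν]; ring
  refine ⟨hTnonneg, hTeq, fun j => ⟨fun hj => ?_, fun hj => ?_⟩⟩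
  · have hjS : j ∈ S := by rw [hS]; simp [hj]
    have := hνformula j
    rw [hsupp j hjS] at this
    rw [this, ← hTeq]
    ring
  · have := hνformula j
    rw [hj, zero_div] at this
    rw [this, ← hTeq]
    ring
end

section
/- Let κ ∈ ℝ_+^J with κ ≠ 0, let ν ∈ ℝ^J, and set E := {j ∈ I : κ_j = 0} (so E ≠ I). If κ − ν lies in the convex cone generated by {d_j : j ∈ E}, then Σ_{j∈E} ν_j ≤ 0. -/
/-- let `κ ∈ ℝ_+^J`, `κ ≠ 0`, and `E = {j : κ_j = 0}`. If `κ − ν` lies in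
the convex cone generated by `{d_j : j ∈ E}` (i.e. is a nonnegative combination of the
`d_j`, `j ∈ E`), then `Σ_{j∈E} ν_j ≤ 0`. -/
theorem gps_cone_membership_sum_nonpos
    (J : ℕ) (hJ : 2 ≤ J) (β : Fin J → ℝ)
    (hβ : ∀ i, 0 < β i ∧ β i < 1) (hβsum : ∑ i, β i = 1)
    (d : Fin J → Fin J → ℝ)
    (hd : ∀ i j, d i j = if j = i then 1 else -(β j) / (1 - β i))
    (κ ν : Fin J → ℝ) (hκ : ∀ i, 0 ≤ κ i) (hκ0 : κ ≠ 0)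
    (hcone : ∃ a : Fin J → ℝ, (∀ j, 0 ≤ a j) ∧ (∀ j, κ j ≠ 0 → a j = 0) ∧
        κ - ν = ∑ j, a j • d j) :
    ∑ j ∈ Finset.univ.filter (fun j => κ j = 0), ν j ≤ 0 := by
  obtain ⟨a, ha0, haz, heq⟩ := hcone
  set E := Finset.univ.filter (fun j => κ j = 0) with hE
  have hκE : ∀ j ∈ E, κ j = 0 := by
    intro j hj
    simpa [hE] using hj
  have hsum : ∑ j ∈ E, (κ j - ν j) = ∑ j ∈ E, ∑ k, a k * d k j := by
    refine Finset.sum_congr rfl fun j _ => ?_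
    have := congrFun heq j
    simpa [Finset.sum_apply] using this
  have hL : ∑ j ∈ E, (κ j - ν j) = - ∑ j ∈ E, ν j := by
    rw [Finset.sum_sub_distrib, Finset.sum_congr rfl hκE]
    simp
  have hR : 0 ≤ ∑ j ∈ E, ∑ k, a k * d k j := by
    rw [Finset.sum_comm]
    refine Finset.sum_nonneg fun k _ => ?_
    by_cases hk : κ k = 0
    · rw [← Finset.mul_sum]
      refine mul_nonneg (ha0 k) ?_
      have hk1 : (0:ℝ) < 1 - β k := by linarith [(hβ k).2]
      have hkE : k ∈ E := by simp [hE, hk]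
      rw [← Finset.add_sum_erase _ _ hkE, hd k k, if_pos rfl]
      have hrest : ∑ j ∈ E.erase k, d k j = (- ∑ j ∈ E.erase k, β j) / (1 - β k) := by
        rw [← Finset.sum_neg_distrib, Finset.sum_div]
        refine Finset.sum_congr rfl fun j hj => ?_
        rw [hd k j, if_neg (Finset.ne_of_mem_erase hj), neg_div]
      rw [hrest]
      have hle : ∑ j ∈ E.erase k, β j ≤ 1 - β k := by
        have : ∑ j ∈ E.erase k, β j ≤ ∑ j ∈ Finset.univ.erase k, β j := by
          refine Finset.sum_le_sum_of_subset_of_nonneg ?_ (fun j _ _ => (hβ j).1.le)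
          exact Finset.erase_subset_erase _ (Finset.subset_univ _)
        rw [Finset.sum_erase_eq_sub (Finset.mem_univ k), hβsum] at this
        exact this
      rw [neg_div, ← sub_eq_add_neg, sub_nonneg, div_le_one hk1]
      exact hle
    · rw [haz k hk]
      simp
  linarith [hsum ▸ hR, hL ▸ hsum ▸ hR]
end

section
/- Let ν ∈ ℝ^J with Σ_{j∈I} ν_j ≥ 0, and let S ⊊ I be a set such that r_S := (−Σ_{j∈S} ν_j)/(1 − Σ_{j∈S} β_j) > 0 and such that, for every j ∈ I, ν_j/β_j < r_S if and only if j ∈ S. Define θ̃_j := −(1−β_j) ν_j + β_j (1−β_j) r_S for j ∈ S, and κ̃ := ν + Σ_{j∈S} θ̃_j d_j. Then S is nonempty, θ̃_j > 0 for every j ∈ S, κ̃_j = 0 for every j ∈ S, κ̃_j = ν_j − β_j r_S ≥ 0 for every j ∉ S, and κ̃ is a GPS projection of ν. -/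
/-- if `Σ_j ν_j ≥ 0`, `S ⊊ I` satisfies `r_S > 0` and
`ν_j/β_j < r_S ↔ j ∈ S`, then with `θ̃_j = −(1−β_j)ν_j + β_j(1−β_j)r_S` for `j ∈ S` and
`κ̃ = ν + Σ_{j∈S} θ̃_j d_j`, the set `S` is nonempty, `θ̃_j > 0` on `S`, `κ̃_j = 0` on
`S`, `κ̃_j = ν_j − β_j r_S ≥ 0` off `S`, and `κ̃` is a GPS projection of `ν`. -/
theorem gps_projection_from_subcritical_set
    (J : ℕ) (hJ : 2 ≤ J) (β : Fin J → ℝ)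
    (hβ : ∀ i, 0 < β i ∧ β i < 1) (hβsum : ∑ i, β i = 1)
    (ν : Fin J → ℝ) (hν : 0 ≤ ∑ j, ν j)
    (S : Finset (Fin J)) (hSne : S ≠ Finset.univ)
    (r : ℝ) (hr : r = (-∑ j ∈ S, ν j) / (1 - ∑ j ∈ S, β j)) (hrpos : 0 < r)
    (hiff : ∀ j, ν j / β j < r ↔ j ∈ S)
    (θ : Fin J → ℝ)
    (hθdef : ∀ j ∈ S, θ j = -(1 - β j) * ν j + β j * (1 - β j) * r)
    (κ : Fin J → ℝ) (hκdef : κ = ν + ∑ j ∈ S, θ j • gpsD β j) :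
    S.Nonempty ∧
    (∀ j ∈ S, 0 < θ j) ∧
    (∀ j ∈ S, κ j = 0) ∧
    (∀ j ∉ S, κ j = ν j - β j * r ∧ 0 ≤ κ j) ∧
    IsGPSProj β ν κ := by

  have hβ1 : ∀ k : Fin J, (1 : ℝ) - β k ≠ 0 := fun k => by have := (hβ k).2; linarith
  obtain ⟨i0, hi0⟩ : ∃ i, i ∉ S := by
    by_contra h
    push_neg at h
    exact hSne (Finset.eq_univ_iff_forall.mpr h)
  have hβS : ∑ j ∈ S, β j < 1 := by
    rw [← hβsum]
    exact Finset.sum_lt_sum_of_subset (Finset.subset_univ S) (Finset.mem_univ i0) hi0 (hβ i0).1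
      (fun j _ _ => (hβ j).1.le)
  have hden : (0:ℝ) < 1 - ∑ j ∈ S, β j := by linarith
  have hνS : r * (1 - ∑ j ∈ S, β j) = -∑ j ∈ S, ν j := by
    rw [hr]; field_simp
  have hterm : ∀ k ∈ S, θ k / (1 - β k) = -ν k + β k * r := by
    intro k hk
    rw [hθdef k hk]
    field_simp [hβ1 k]
  have hsum : ∑ k ∈ S, θ k / (1 - β k) = r := by
    rw [Finset.sum_congr rfl hterm, Finset.sum_add_distrib, ← Finset.sum_mul,
        Finset.sum_neg_distrib]
    linarith [hνS]
  have hθpos : ∀ j ∈ S, 0 < θ j := by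
    intro j hj
    have hb := hβ j
    have h1 : ν j < β j * r := by
      have := (hiff j).2 hj
      rw [div_lt_iff₀ hb.1] at this
      linarith
    rw [hθdef j hj]
    nlinarith
  have hκapp : ∀ j, κ j = ν j + ∑ k ∈ S, θ k * gpsD β k j := by
    intro j
    rw [hκdef]
    simp [Finset.sum_apply]
  have hκoff : ∀ j ∉ S, κ j = ν j - β j * r := by
    intro j hj
    rw [hκapp j]
    have h1 : ∑ k ∈ S, θ k * gpsD β k j = ∑ k ∈ S, (-(β j)) * (θ k / (1 - β k)) := by
      apply Finset.sum_congr rfl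
      intro k hk
      have hjk : j ≠ k := fun h => hj (h ▸ hk)
      simp only [gpsD, if_neg hjk]
      field_simp
    rw [h1, ← Finset.mul_sum, hsum]; ring
  have hκon : ∀ j ∈ S, κ j = 0 := by
    intro j hj
    rw [hκapp j]
    rw [← Finset.add_sum_erase _ _ hj]
    have h1 : ∑ k ∈ S.erase j, θ k * gpsD β k j
        = ∑ k ∈ S.erase j, (-(β j)) * (θ k / (1 - β k)) := by
      apply Finset.sum_congr rfl
      intro k hk
      have hjk : j ≠ k := fun h => (Finset.ne_of_mem_erase hk) h.symm
      simp only [gpsD, if_neg hjk]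
      field_simp
    have h2 : ∑ k ∈ S.erase j, θ k / (1 - β k) = r - θ j / (1 - β j) := by
      have := Finset.add_sum_erase S (fun k => θ k / (1 - β k)) hj
      rw [hsum] at this
      linarith
    have hd : gpsD β j j = 1 := by simp [gpsD]
    rw [h1, ← Finset.mul_sum, h2, hterm j hj, hd, hθdef j hj]
    ring
  have hSnon : S.Nonempty := by
    rcases S.eq_empty_or_nonempty with h | h
    · exfalso
      rw [h] at hr
      simp at hr
      rw [hr] at hrpos
      exact lt_irrefl _ hrpos
    · exact h
  have hκoffpos : ∀ j ∉ S, 0 ≤ κ j := by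
    intro j hj
    rw [hκoff j hj]
    have := (hiff j).not
    have h1 : r ≤ ν j / β j := by
      by_contra h
      push_neg at h
      exact hj ((hiff j).1 h)
    rw [le_div_iff₀ (hβ j).1] at h1
    linarith
  have hκnn : ∀ i, 0 ≤ κ i := by
    intro i
    by_cases hi : i ∈ S
    · rw [hκon i hi]
    · exact hκoffpos i hi
  have hνneg : ¬ ∀ i, 0 ≤ ν i := by
    intro h
    have h1 : (0:ℝ) ≤ ∑ j ∈ S, ν j := Finset.sum_nonneg fun j _ => h j
    nlinarith [hνS]
  have hκν : κ - ν = ∑ j ∈ S, θ j • gpsD β j := by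
    rw [hκdef]; abel
  have hsumext : ∑ i, (if i ∈ S then θ i else 0) • gpsD β i = ∑ j ∈ S, θ j • gpsD β j := by
    calc ∑ i, (if i ∈ S then θ i else 0) • gpsD β i
        = ∑ i, (if i ∈ S then θ i • gpsD β i else 0) := by
          apply Finset.sum_congr rfl; intro i _; split <;> simp
      _ = ∑ j ∈ S, θ j • gpsD β j := by rw [Finset.sum_ite_mem, Finset.univ_inter]
  refine ⟨hSnon, hθpos, hκon, fun j hj => ⟨hκoff j hj, hκoffpos j hj⟩, hκnn, Or.inr ⟨hνneg, ⟨hSnon.choose, hκon _ hSnon.choose_spec⟩, ?_⟩⟩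
  by_cases hκ0 : κ = 0
  · left
    refine ⟨hκ0, fun i => if i ∈ S then θ i else 0, 0, fun i => ?_, le_refl 0, ?_⟩
    · by_cases hi : i ∈ S
      · simp [hi, (hθpos i hi).le]
      · simp [hi]
    · rw [zero_smul, add_zero, hsumext, hκν]
  · right
    refine ⟨hκ0, fun i => if i ∈ S then θ i else 0, fun i => ?_, fun i hi => ?_, ?_⟩
    · by_cases hi : i ∈ S
      · simp [hi, (hθpos i hi).le]
      · simp [hi]
    · have : i ∉ S := fun h => hi (hκon i h)
      simp [this]
    · rw [hsumext, hκν]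
end

section
/- Let ν ∈ ℝ^J with Σ_{j∈I} ν_j ≥ 0. Then there is at most one subset S ⊊ I such that (−Σ_{j∈S} ν_j)/(1 − Σ_{j∈S} β_j) > 0 and such that, for every j ∈ I, ν_j/β_j < (−Σ_{k∈S} ν_k)/(1 − Σ_{k∈S} β_k) if and only if j ∈ S. -/
lemma gps_denom_pos {J : ℕ} (β : Fin J → ℝ) (hβ : ∀ i, 0 < β i)
    (hβsum : ∑ i, β i = 1) (S : Finset (Fin J)) (hS : S ≠ Finset.univ) :
    0 < 1 - ∑ k ∈ S, β k := by
  obtain ⟨i, hi⟩ : ∃ i, i ∉ S := by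
    by_contra h
    push_neg at h
    exact hS (Finset.eq_univ_of_forall h)
  have : ∑ k ∈ S, β k < ∑ k, β k :=
    Finset.sum_lt_sum_of_subset (Finset.subset_univ S) (Finset.mem_univ i) hi (hβ i)
      (fun j _ _ => (hβ j).le)
  linarith [hβsum ▸ this]

lemma gps_aux {J : ℕ} (β ν : Fin J → ℝ) (hβ : ∀ i, 0 < β i)
    (hβsum : ∑ i, β i = 1)
    (S T : Finset (Fin J)) (hS : S ≠ Finset.univ) (hT : T ≠ Finset.univ)
    (hmS : ∀ j, ν j / β j < (-∑ k ∈ S, ν k) / (1 - ∑ k ∈ S, β k) ↔ j ∈ S)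
    (hmT : ∀ j, ν j / β j < (-∑ k ∈ T, ν k) / (1 - ∑ k ∈ T, β k) ↔ j ∈ T)
    (hle : (-∑ k ∈ S, ν k) / (1 - ∑ k ∈ S, β k) ≤ (-∑ k ∈ T, ν k) / (1 - ∑ k ∈ T, β k)) :
    S = T := by
  set rS := (-∑ k ∈ S, ν k) / (1 - ∑ k ∈ S, β k) with hrS
  set rT := (-∑ k ∈ T, ν k) / (1 - ∑ k ∈ T, β k) with hrT
  have hdS : 0 < 1 - ∑ k ∈ S, β k := gps_denom_pos β hβ hβsum S hS
  have hdT : 0 < 1 - ∑ k ∈ T, β k := gps_denom_pos β hβ hβsum T hT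
  have hST : S ⊆ T := fun j hj => (hmT j).1 (lt_of_lt_of_le ((hmS j).2 hj) hle)
  -- numS = rS * denS
  have hnumS : -∑ k ∈ S, ν k = rS * (1 - ∑ k ∈ S, β k) := by
    rw [hrS]; field_simp
  -- elementwise bound on T \ S
  have hbound : rS * ∑ k ∈ T \ S, β k ≤ ∑ k ∈ T \ S, ν k := by
    rw [Finset.mul_sum]
    apply Finset.sum_le_sum
    intro j hj
    have hjS : j ∉ S := (Finset.mem_sdiff.1 hj).2
    have : ¬ (ν j / β j < rS) := fun h => hjS ((hmS j).1 h)
    push_neg at this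
    have hb := hβ j
    rw [le_div_iff₀ hb] at this
    exact this
  have hsplit : ∑ k ∈ T \ S, ν k + ∑ k ∈ S, ν k = ∑ k ∈ T, ν k :=
    Finset.sum_sdiff hST
  have hsplitβ : ∑ k ∈ T \ S, β k + ∑ k ∈ S, β k = ∑ k ∈ T, β k :=
    Finset.sum_sdiff hST
  have hrTle : rT ≤ rS := by
    rw [hrT, div_le_iff₀ hdT]
    have h2 : rS * (∑ k ∈ T \ S, β k) + rS * (∑ k ∈ S, β k) = rS * ∑ k ∈ T, β k := by
      rw [← mul_add, hsplitβ]
    linarith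
  have hTS : T ⊆ S := fun j hj => (hmS j).1 (lt_of_lt_of_le ((hmT j).2 hj) hrTle)
  exact Finset.Subset.antisymm hST hTS

/-- if `Σ_j ν_j ≥ 0`, there is at most one subset `S ⊊ I` with
`r_S = (−Σ_{j∈S} ν_j)/(1 − Σ_{j∈S} β_j) > 0` such that, for every `j`,
`ν_j/β_j < r_S` if and only if `j ∈ S`. -/
theorem gps_subcritical_set_unique
    (J : ℕ) (hJ : 2 ≤ J) (β : Fin J → ℝ)
    (hβ : ∀ i, 0 < β i ∧ β i < 1) (hβsum : ∑ i, β i = 1)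
    (ν : Fin J → ℝ) (hν : 0 ≤ ∑ j, ν j) :
    ∀ S T : Finset (Fin J), S ≠ Finset.univ → T ≠ Finset.univ →
      0 < (-∑ j ∈ S, ν j) / (1 - ∑ j ∈ S, β j) →
      0 < (-∑ j ∈ T, ν j) / (1 - ∑ j ∈ T, β j) →
      (∀ j, ν j / β j < (-∑ k ∈ S, ν k) / (1 - ∑ k ∈ S, β k) ↔ j ∈ S) →
      (∀ j, ν j / β j < (-∑ k ∈ T, ν k) / (1 - ∑ k ∈ T, β k) ↔ j ∈ T) →
      S = T := by
  intro S T hS hT _ _ hmS hmT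
  rcases le_total ((-∑ k ∈ S, ν k) / (1 - ∑ k ∈ S, β k))
      ((-∑ k ∈ T, ν k) / (1 - ∑ k ∈ T, β k)) with h | h
  · exact gps_aux β ν (fun i => (hβ i).1) hβsum S T hS hT hmS hmT h
  · exact (gps_aux β ν (fun i => (hβ i).1) hβsum T S hT hS hmT hmS h).symm
end

section
/- Let ν ∈ ℝ^J satisfy Σ_{j∈I} ν_j = 0 and min_{j∈I} ν_j < 0, and suppose the coordinates are ordered so that ν_1/β_1 ≥ ν_2/β_2 ≥ … ≥ ν_J/β_J. Set S := {j ∈ I : ν_j/β_j < ν_1/β_1}. Then S is nonempty, S ≠ I, there exists j_* ∈ I with S = {j_*, j_*+1, …, J}, r_S := (−Σ_{j∈S} ν_j)/(1 − Σ_{j∈S} β_j) = ν_1/β_1 > 0, for every j ∈ I one has ν_j/β_j < r_S if and only if j ∈ S, and ν_j = −β_j (Σ_{k∈S} ν_k)/(1 − Σ_{k∈S} β_k) for every j ∉ S. -/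
/-- if `Σ_j ν_j = 0`, `min_j ν_j < 0`, and the coordinates are ordered so
that `ν_1/β_1 ≥ ν_2/β_2 ≥ … ≥ ν_J/β_J`, then `S = {j : ν_j/β_j < ν_1/β_1}` is nonempty,
proper, of the form `{j_*, …, J}`, `r_S = ν_1/β_1 > 0`, `ν_j/β_j < r_S ↔ j ∈ S`, and
`ν_j = −β_j (Σ_{k∈S} ν_k)/(1 − Σ_{k∈S} β_k)` for `j ∉ S`. -/
theorem gps_strictly_subcritical_set_characterization
    (J : ℕ) (hJ : 2 ≤ J) (β : Fin J → ℝ)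
    (hβ : ∀ i, 0 < β i ∧ β i < 1) (hβsum : ∑ i, β i = 1)
    (ν : Fin J → ℝ) (hνsum : ∑ j, ν j = 0) (hνmin : ∃ j, ν j < 0)
    (hord : ∀ i j : Fin J, i ≤ j → ν j / β j ≤ ν i / β i)
    (i0 : Fin J) (hi0 : (i0 : ℕ) = 0)
    (S : Finset (Fin J))
    (hS : S = Finset.univ.filter (fun j => ν j / β j < ν i0 / β i0)) :
    S.Nonempty ∧
    S ≠ Finset.univ ∧
    (∃ jstar : Fin J, S = Finset.univ.filter (fun j => jstar ≤ j)) ∧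
    (-∑ j ∈ S, ν j) / (1 - ∑ j ∈ S, β j) = ν i0 / β i0 ∧
    0 < ν i0 / β i0 ∧
    (∀ j, ν j / β j < (-∑ k ∈ S, ν k) / (1 - ∑ k ∈ S, β k) ↔ j ∈ S) ∧
    (∀ j ∉ S, ν j = -(β j) * (∑ k ∈ S, ν k) / (1 - ∑ k ∈ S, β k)) := by
  have hβpos : ∀ i, 0 < β i := fun i => (hβ i).1
  set c := ν i0 / β i0 with hc
  have hi0le : ∀ j : Fin J, i0 ≤ j := fun j => by
    simp [Fin.le_def, hi0]
  have hle : ∀ j, ν j / β j ≤ c := fun j => hord i0 j (hi0le j)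
  have hmem : ∀ j, j ∈ S ↔ ν j / β j < c := by
    intro j; simp [hS]
  obtain ⟨j0, hj0⟩ := hνmin
  -- c > 0
  have hcpos : 0 < c := by
    by_contra h
    push_neg at h
    have hall : ∀ j : Fin J, j ∈ Finset.univ → ν j ≤ (fun _ => (0:ℝ)) j := by
      intro j _
      have h2 : ν j / β j ≤ 0 := (hle j).trans h
      have := (div_le_iff₀ (hβpos j)).mp h2
      simpa using this
    have hlt : ∑ j, ν j < ∑ _j : Fin J, (0:ℝ) :=
      Finset.sum_lt_sum hall ⟨j0, Finset.mem_univ j0, by simpa using hj0⟩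
    simp [hνsum] at hlt
  -- S nonempty
  have hne : S.Nonempty := by
    refine ⟨j0, (hmem j0).mpr ?_⟩
    exact lt_of_lt_of_le (div_neg_of_neg_of_pos hj0 (hβpos j0)) hcpos.le
  have hi0notS : i0 ∉ S := by
    rw [hmem]; exact lt_irrefl _
  -- values outside S
  have hout : ∀ j ∉ S, ν j = β j * c := by
    intro j hj
    have heq : ν j / β j = c := le_antisymm (hle j) (not_lt.mp (fun hl => hj ((hmem j).mpr hl)))
    have := (div_eq_iff (ne_of_gt (hβpos j))).mp heq
    linarith [this]
  have hsumν : ∑ j ∈ Sᶜ, ν j = -∑ j ∈ S, ν j := by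
    have := Finset.sum_add_sum_compl S ν
    rw [hνsum] at this; linarith
  have hsumβ : ∑ j ∈ Sᶜ, β j = 1 - ∑ j ∈ S, β j := by
    have := Finset.sum_add_sum_compl S β
    rw [hβsum] at this; linarith
  have hpos1 : 0 < 1 - ∑ j ∈ S, β j := by
    rw [← hsumβ]
    exact Finset.sum_pos (fun i _ => hβpos i) ⟨i0, Finset.mem_compl.mpr hi0notS⟩
  have hkey : -∑ j ∈ S, ν j = c * (1 - ∑ j ∈ S, β j) := by
    rw [← hsumν, ← hsumβ]
    rw [Finset.sum_congr rfl (fun j hj => hout j (Finset.mem_compl.mp hj))]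
    rw [← Finset.sum_mul, mul_comm]
  have hrS : (-∑ j ∈ S, ν j) / (1 - ∑ j ∈ S, β j) = c := by
    rw [hkey, mul_div_assoc, div_self (ne_of_gt hpos1), mul_one]
  refine ⟨hne, ?_, ?_, hrS, hcpos, ?_, ?_⟩
  · intro h
    exact hi0notS (h ▸ Finset.mem_univ i0)
  · refine ⟨S.min' hne, ?_⟩
    ext j
    simp only [Finset.mem_filter, Finset.mem_univ, true_and]
    constructor
    · exact fun hj => S.min'_le j hj
    · intro hj
      have hmin : S.min' hne ∈ S := S.min'_mem hne
      have h1 : ν j / β j ≤ ν (S.min' hne) / β (S.min' hne) := hord _ j hj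
      exact (hmem j).mpr (lt_of_le_of_lt h1 ((hmem _).mp hmin))
  · intro j
    rw [hrS]
    exact (hmem j).symm
  · intro j hj
    have h1 : ∑ k ∈ S, ν k = -(c * (1 - ∑ j ∈ S, β j)) := by linarith [hkey]
    rw [hout j hj, h1, neg_mul, mul_neg, neg_neg, mul_div_assoc, mul_div_assoc,
      div_self (ne_of_gt hpos1), mul_one]
end

section
/- For j ∈ I, let P^{(j)} be the J×J real matrix whose k-th column is d_k for every k ≠ j and whose j-th column is e_j, and set Q^{(j)} := I − P^{(j)} (I the identity matrix). Then: all entries of Q^{(j)} are nonnegative; Q^{(j)}_{ij} = 0 for every i ∈ I; for k ≠ j, Q^{(j)}_{kk} = 0 and Q^{(j)}_{ik} = β_i/(1−β_k) for i ≠ k; Σ_{i∈I} Q^{(j)}_{ik} = 1 for every k ≠ j; for i ≠ j the (i,j) entry of the transpose of Q^{(j)} equals β_j/(1−β_i) > 0; and the spectral radius of Q^{(j)} is strictly less than 1. -/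
open scoped Matrix NNReal ENNReal

attribute [local instance] Matrix.linftyOpNormedRing Matrix.linftyOpNormedAlgebra

/-- properties of the matrix `Q^{(j)} = I − P^{(j)}`, where `P^{(j)}` has
`k`-th column `d_k` for `k ≠ j` and `j`-th column `e_j`: all entries of `Q^{(j)}` are
nonnegative, its `j`-th column vanishes, for `k ≠ j` its `k`-th column has zero diagonal
entry and off-diagonal entries `β_i/(1−β_k)` summing to `1`, for `i ≠ j` the `(i,j)`
entry of its transpose is `β_j/(1−β_i) > 0`, and its spectral radius is `< 1`. -/
theorem gps_substochastic_matrix_properties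
    (J : ℕ) (hJ : 2 ≤ J) (β : Fin J → ℝ)
    (hβ : ∀ i, 0 < β i ∧ β i < 1) (hβsum : ∑ i, β i = 1)
    (d : Fin J → Fin J → ℝ)
    (hd : ∀ i j, d i j = if j = i then 1 else -(β j) / (1 - β i))
    (j : Fin J)
    (P : Matrix (Fin J) (Fin J) ℝ)
    (hP : ∀ i k, P i k = if k = j then (if i = j then (1:ℝ) else 0) else d k i)
    (Q : Matrix (Fin J) (Fin J) ℝ) (hQ : Q = 1 - P) :
    (∀ i k, 0 ≤ Q i k) ∧
    (∀ i, Q i j = 0) ∧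
    (∀ k, k ≠ j → Q k k = 0 ∧ ∀ i, i ≠ k → Q i k = β i / (1 - β k)) ∧
    (∀ k, k ≠ j → ∑ i, Q i k = 1) ∧
    (∀ i, i ≠ j → Q.transpose i j = β j / (1 - β i) ∧ 0 < Q.transpose i j) ∧
    spectralRadius ℂ (Q.map (Complex.ofReal ·)) < 1 := by
  haveI : Nonempty (Fin J) := ⟨⟨0, by omega⟩⟩
  have hpos : ∀ i, 0 < 1 - β i := fun i => by linarith [(hβ i).2]
  -- entrywise formula for Q
  have hQe : ∀ i k, Q i k = if k = j then 0 else if i = k then 0 else β i / (1 - β k) := by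
    intro i k
    rw [hQ]
    simp only [Matrix.sub_apply, Matrix.one_apply, hP]
    by_cases hkj : k = j
    · rw [hkj]; simp
    · rw [hd]
      by_cases hik : i = k
      · subst hik; simp [hkj]
      · simp only [if_neg hkj, if_neg hik, neg_div]
        ring
  have hQj : ∀ l, Q l j = 0 := fun l => by rw [hQe]; simp
  have hnonneg : ∀ i k, 0 ≤ Q i k := by
    intro i k
    rw [hQe]
    split
    · exact le_rfl
    · split
      · exact le_rfl
      · exact div_nonneg (hβ i).1.le (hpos k).le
  -- column sums
  have hcolsum : ∀ k, ∑ i, Q i k = if k = j then 0 else 1 := by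
    intro k
    by_cases hkj : k = j
    · subst hkj; simp [hQj]
    · rw [if_neg hkj]
      have h1 : ∀ i, Q i k = (β i - if i = k then β i else 0) / (1 - β k) := by
        intro i
        rw [hQe, if_neg hkj]
        by_cases hik : i = k
        · subst hik; simp
        · simp [hik]
      rw [Finset.sum_congr rfl fun i _ => h1 i, ← Finset.sum_div,
        Finset.sum_sub_distrib, hβsum, Finset.sum_ite_eq' Finset.univ k β,
        if_pos (Finset.mem_univ k), div_self (ne_of_gt (hpos k))]
  refine ⟨hnonneg, hQj, ?_, ?_, ?_, ?_⟩
  · intro k hkj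
    constructor
    · rw [hQe]; simp [hkj]
    · intro i hik
      rw [hQe, if_neg hkj, if_neg hik]
  · intro k hkj
    rw [hcolsum, if_neg hkj]
  · intro i hij
    have h : Q.transpose i j = β j / (1 - β i) := by
      rw [Matrix.transpose_apply, hQe, if_neg hij, if_neg (Ne.symm hij)]
    exact ⟨h, h ▸ div_pos (hβ j).1 (hpos i)⟩
  -- spectral radius
  · set A : Matrix (Fin J) (Fin J) ℂ := Q.map (Complex.ofReal ·) with hA
    have hspec : spectrum ℂ A = spectrum ℂ Aᵀ := by
      ext z
      have htr : (algebraMap ℂ (Matrix (Fin J) (Fin J) ℂ) z)ᵀ =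
          algebraMap ℂ (Matrix (Fin J) (Fin J) ℂ) z := by
        simp [Matrix.algebraMap_eq_diagonal]
      rw [spectrum.mem_iff, spectrum.mem_iff, not_iff_not,
        Matrix.isUnit_iff_isUnit_det, Matrix.isUnit_iff_isUnit_det,
        ← Matrix.det_transpose (algebraMap ℂ _ z - A), Matrix.transpose_sub, htr]
    have hrad : spectralRadius ℂ A = spectralRadius ℂ Aᵀ := by
      unfold spectralRadius; rw [hspec]
    -- entries of Q² are nonneg and its column sums are ≤ 1 - β j
    have hS : ∀ i, ∑ k, (Q * Q) k i ≤ 1 - β j := by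
      intro i
      by_cases hij : i = j
      · have hz : ∀ k, (Q * Q) k i = 0 := by
          intro k
          simp [Matrix.mul_apply, hij, hQj]
        simp only [hz, Finset.sum_const_zero]
        linarith [(hβ j).2]
      · have hswap : ∑ k, (Q * Q) k i = ∑ l, (∑ k, Q k l) * Q l i := by
          simp only [Matrix.mul_apply]
          rw [Finset.sum_comm]
          exact Finset.sum_congr rfl fun l _ => (Finset.sum_mul _ _ _).symm
        have hterm : ∀ l, (∑ k, Q k l) * Q l i = Q l i - (if l = j then Q l i else 0) := by
          intro l
          rw [hcolsum l]
          by_cases hlj : l = j <;> simp [hlj]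
        have hQji : Q j i = β j / (1 - β i) := by
          rw [hQe, if_neg hij, if_neg (Ne.symm hij)]
        have hdivge : β j ≤ β j / (1 - β i) := by
          rw [le_div_iff₀ (hpos i)]
          nlinarith [(hβ j).1, (hβ i).1]
        rw [hswap, Finset.sum_congr rfl fun l _ => hterm l, Finset.sum_sub_distrib,
          hcolsum i, if_neg hij, Finset.sum_ite_eq' Finset.univ j (fun l => Q l i),
          if_pos (Finset.mem_univ j), hQji]
        linarith
    -- key norm bound on (Aᵀ)²
    have hent : ∀ i k, (Aᵀ * Aᵀ) i k = (((Q * Q) k i : ℝ) : ℂ) := by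
      intro i k
      simp only [Matrix.mul_apply, Matrix.transpose_apply, hA, Matrix.map_apply,
        Complex.ofReal_sum, Complex.ofReal_mul]
      exact Finset.sum_congr rfl fun l _ => mul_comm _ _
    have hQsqnonneg : ∀ k i, 0 ≤ (Q * Q) k i := by
      intro k i
      simp only [Matrix.mul_apply]
      exact Finset.sum_nonneg fun l _ => mul_nonneg (hnonneg k l) (hnonneg l i)
    have hkey : ‖Aᵀ ^ 2‖₊ ≤ Real.toNNReal (1 - β j) := by
      rw [pow_two, Matrix.linfty_opNNNorm_def]
      apply Finset.sup_le
      intro i _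
      have : ∀ k, ‖(Aᵀ * Aᵀ) i k‖₊ = ((Q * Q) k i).toNNReal := by
        intro k
        rw [hent, Complex.nnnorm_real, ← Real.toNNReal_eq_nnnorm_of_nonneg (hQsqnonneg k i)]
      rw [Finset.sum_congr rfl fun k _ => this k,
        ← Real.toNNReal_sum_of_nonneg fun k _ => hQsqnonneg k i]
      exact Real.toNNReal_le_toNNReal (hS i)
    have hlt1 : Real.toNNReal (1 - β j) < 1 := by
      rw [← Real.toNNReal_one, Real.toNNReal_lt_toNNReal_iff (by norm_num)]
      linarith [(hβ j).1]
    have hnormlt : (‖Aᵀ ^ 2‖₊ : ENNReal) < 1 := by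
      exact_mod_cast lt_of_le_of_lt hkey hlt1
    have hle := spectrum.spectralRadius_le_pow_nnnorm_pow_one_div ℂ Aᵀ 1
    simp only [nnnorm_one, ENNReal.coe_one, ENNReal.one_rpow, mul_one] at hle
    norm_num at hle
    calc spectralRadius ℂ A = spectralRadius ℂ Aᵀ := hrad
      _ ≤ (‖Aᵀ ^ 2‖₊ : ENNReal) ^ (1 / 2 : ℝ) := hle
      _ < 1 := ENNReal.rpow_lt_one hnormlt (by norm_num)
end
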